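/- Let (X, r) be a non-degenerate involutive set-theoretic solution of the Yang–Baxter equation with |X| = m ≥ 2, let λ ∈ P(n, m) have positive parts λ_1 ≥ ⋯ ≥ λ_k > 0, let x ∈ X^n be a λ-element, and let φ : S_n → Perm(X^n) be the group homomorphism with φ((j, j+1)) = b_j for all 1 ≤ j ≤ n−1. Then the stabilizer {g ∈ S_n : φ(g)(x) = x} is exactly the Young subgroup S_{λ_1} × S_{λ_2} × ⋯ × S_{λ_k}, i.e. the subgroup of all permutations of {1, …, n} mapping each of the consecutive blocks {λ_1 + ⋯ + λ_{i−1} + 1, …, λ_1 + ⋯ + λ_i} (1 ≤ i ≤ k) to itself. -/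

import Mathlib

/-! Set-theoretic solutions of the Yang–Baxter equation.
For `r : X × X → X × X` we write `r (i, j) = (σ i j, τ j i)`, i.e. `σ_i(j) = σ i j` and
`τ_j(i) = τ j i`. -/

variable {X : Type*}

/-- The map `r : X × X → X × X` determined by families `σ`, `τ` via
`r (i, j) = (σ_i(j), τ_j(i))`. -/
def rmapF (σ τ : X → X → X) : X × X → X × X := fun p => (σ p.1 p.2, τ p.2 p.1)

/-- `r × id` on `X × X × X`. -/
def ridF (r : X × X → X × X) : X × X × X → X × X × X :=
  fun p => ((r (p.1, p.2.1)).1, (r (p.1, p.2.1)).2, p.2.2)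

/-- `id × r` on `X × X × X`. -/
def idrF (r : X × X → X × X) : X × X × X → X × X × X := fun p => (p.1, r p.2)

/-- The braid (Yang–Baxter) equation `(r × id) ∘ (id × r) ∘ (r × id) = (id × r) ∘ (r × id) ∘ (id × r)`. -/
def BraidEq (r : X × X → X × X) : Prop :=
  ridF r ∘ idrF r ∘ ridF r = idrF r ∘ ridF r ∘ idrF r

/-- A non-degenerate involutive set-theoretic solution of the Yang–Baxter equation on `X`:
the maps `σ_i` and `τ_i` are bijective (packaged as equivalences), the induced map
`r (i, j) = (σ_i(j), τ_j(i))` satisfies the braid equation, and `r ∘ r = id`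
(which in particular makes `r` bijective). -/
structure NDIS (X : Type*) where
  σ : X → X ≃ X
  τ : X → X ≃ X
  braid : BraidEq (rmapF (fun i => ⇑(σ i)) (fun i => ⇑(τ i)))
  invol : ∀ p : X × X,
    rmapF (fun i => ⇑(σ i)) (fun i => ⇑(τ i))
      (rmapF (fun i => ⇑(σ i)) (fun i => ⇑(τ i)) p) = p

namespace NDIS

/-- The map `r` of the solution. -/
def r (S : NDIS X) : X × X → X × X := rmapF (fun i => ⇑(S.σ i)) (fun i => ⇑(S.τ i))

/-- The diagonal `D : X → X`, `D(i) = τ_i⁻¹(i)`. -/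
def D (S : NDIS X) : X → X := fun i => (S.τ i).symm i

end NDIS
namespace NDIS

/-- One elementary move on words: apply `r` to two adjacent letters. -/
def Step (S : NDIS X) (x y : List X) : Prop :=
  ∃ (u v : List X) (i j : X), x = u ++ i :: j :: v ∧ y = u ++ S.σ i j :: S.τ j i :: v

/-- The orbit `O(x)` of a word `x` under the equivalence relation generated by the
adjacent `r`-moves (equivalently, the orbit of the induced `S_n`-action on `X^n`). -/
def Orb (S : NDIS X) (x : List X) : Set (List X) := {y | Relation.EqvGen S.Step x y}

/-- `Ψ_k(a) = (D^{k−1}(a), …, D(a), a)`. -/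
def Psi (S : NDIS X) (k : ℕ) (a : X) : List X :=
  (List.range k).map fun t => S.D^[k - 1 - t] a

/-- The inverse of the diagonal `D`. -/
noncomputable def Dinv (S : NDIS X) [Nonempty X] : X → X := Function.invFun S.D

/-- `Ψ_{−k}(a) = (a, D^{−1}(a), …, D^{−(k−1)}(a))`. -/
noncomputable def PsiNeg (S : NDIS X) [Nonempty X] (k : ℕ) (a : X) : List X :=
  (List.range k).map fun t => S.Dinv^[t] a

/-- `σ_x = σ_{a_1} ∘ σ_{a_2} ∘ ⋯ ∘ σ_{a_k}` for a word `x = (a_1, …, a_k)`. -/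
def sigmaWord (S : NDIS X) (x : List X) (z : X) : X := x.foldr (fun a w => S.σ a w) z

/-- `τ_x = τ_{a_k} ∘ ⋯ ∘ τ_{a_2} ∘ τ_{a_1}` for a word `x = (a_1, …, a_k)`. -/
def tauWord (S : NDIS X) (x : List X) (z : X) : X := x.foldl (fun w a => S.τ a w) z

/-- The concatenation `Ψ_{L 0}(a 0) Ψ_{L 1}(a 1) ⋯ Ψ_{L (k-1)}(a (k-1))`. -/
def word (S : NDIS X) {k : ℕ} (L : Fin k → ℕ) (a : Fin k → X) : List X :=
  (List.ofFn fun t => S.Psi (L t) (a t)).flatten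

/-- The concatenation `Ψ_{L (i+1)}(a (i+1)) ⋯ Ψ_{L (j-1)}(a (j-1))` of the blocks strictly
between positions `i` and `j` (the empty word when `j = i + 1`). -/
def midword (S : NDIS X) {k : ℕ} (L : Fin k → ℕ) (a : Fin k → X) (i j : Fin k) : List X :=
  (((List.ofFn fun t => S.Psi (L t) (a t)).drop ((i : ℕ) + 1)).take ((j : ℕ) - (i : ℕ) - 1)).flatten

/-- The family `a` yields a `λ`-element: `a_j ≠ D^{−λ_j}(τ_w(a_i))` for all `i < j`, with
`w = Ψ_{λ_{i+1}}(a_{i+1}) ⋯ Ψ_{λ_{j−1}}(a_{j−1})`. -/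
def IsLambdaFamily (S : NDIS X) [Nonempty X] {k : ℕ} (L : Fin k → ℕ) (a : Fin k → X) : Prop :=
  ∀ i j : Fin k, i < j →
    a j ≠ S.Dinv^[L j] (S.tauWord (S.midword L a i j) (a i))

/-- `x` is a `λ`-element for the partition with positive parts `L 0 ≥ L 1 ≥ ⋯ ≥ L (k-1) > 0`. -/
def IsLambdaWord (S : NDIS X) [Nonempty X] {k : ℕ} (L : Fin k → ℕ) (x : List X) : Prop :=
  ∃ a : Fin k → X, x = S.word L a ∧ S.IsLambdaFamily L a

/-- The bijection `b` of `X^n` applying `r` to the entries in (0-based) positions `j` and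
`j + 1` and fixing all other entries. -/
def bmap (S : NDIS X) {n : ℕ} (j : ℕ) (hj : j + 1 < n) (x : Fin n → X) : Fin n → X :=
  fun t =>
    if (t : ℕ) = j then S.σ (x ⟨j, by omega⟩) (x ⟨j + 1, hj⟩)
    else if (t : ℕ) = j + 1 then S.τ (x ⟨j + 1, hj⟩) (x ⟨j, by omega⟩)
    else x t

/-- One elementary move on `X^n` (as functions `Fin n → X`). -/
def StepF (S : NDIS X) {n : ℕ} (x y : Fin n → X) : Prop :=
  ∃ (j : ℕ) (hj : j + 1 < n), y = S.bmap j hj x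

end NDIS

/-- The offset `λ_1 + ⋯ + λ_i` of the `i`-th block (0-based). -/
def blockOffset {k : ℕ} (L : Fin k → ℕ) (i : Fin k) : ℕ :=
  ∑ t ∈ Finset.univ.filter (fun t => t < i), L t

/-- A `(λ_1, …, λ_k)`-shuffle: a permutation strictly increasing on each consecutive block. -/
def IsShuffle {k n : ℕ} (L : Fin k → ℕ) (θ : Equiv.Perm (Fin n)) : Prop :=
  ∀ (i : Fin k) (p q : Fin n), blockOffset L i ≤ (p : ℕ) → p < q →
    (q : ℕ) < blockOffset L i + L i → θ p < θ q

/-! ### Auxiliary development for the stabilizer theorem -/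

namespace NDIS

variable {X : Type*} (S : NDIS X)

lemma tau_D (a : X) : S.τ a (S.D a) = a := by simp [D]

lemma invol1 (i j : X) : S.σ (S.σ i j) (S.τ j i) = i := by
  have := congrArg Prod.fst (S.invol (i, j)); simpa [rmapF] using this

lemma invol2 (i j : X) : S.τ (S.τ j i) (S.σ i j) = j := by
  have := congrArg Prod.snd (S.invol (i, j)); simpa [rmapF] using this

lemma sigma_D (a : X) : S.σ (S.D a) a = S.D a := by
  have h := S.invol2 (S.D a) a
  rw [tau_D] at h
  exact (S.τ a).injective (h.trans (S.tau_D a).symm)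

lemma D_injective : Function.Injective S.D := by
  intro p q h
  have hp := S.sigma_D p; have hq := S.sigma_D q
  rw [h] at hp
  exact (S.σ (S.D q)).injective (hp.trans hq.symm)

lemma tau_braid (i j z : X) : S.τ (S.τ j i) (S.τ (S.σ i j) z) = S.τ j (S.τ i z) := by
  have := congrFun S.braid (z, i, j)
  have h := congrArg (fun p => p.2.2) this
  simpa [ridF, idrF, rmapF, Function.comp] using h.symm

lemma Dinv_D [Nonempty X] (a : X) : S.Dinv (S.D a) = a :=
  Function.leftInverse_invFun S.D_injective a

lemma Dinv_iter_D_iter [Nonempty X] (m : ℕ) (a : X) : S.Dinv^[m] (S.D^[m] a) = a := by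
  induction m generalizing a with
  | zero => rfl
  | succ m ih =>
    rw [Function.iterate_succ_apply, Function.iterate_succ_apply']
    rw [Dinv_D, ih]

/-! tauWord basics -/

@[simp] lemma tauWord_nil (z : X) : S.tauWord [] z = z := rfl
@[simp] lemma tauWord_cons (a : X) (l : List X) (z : X) :
    S.tauWord (a :: l) z = S.tauWord l (S.τ a z) := rfl
lemma tauWord_append (u v : List X) (z : X) :
    S.tauWord (u ++ v) z = S.tauWord v (S.tauWord u z) := by
  simp [tauWord, List.foldl_append]
lemma tauWord_injective (l : List X) : Function.Injective (fun z => S.tauWord l z) := by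
  induction l with
  | nil => intro a b h; simpa using h
  | cons a l ih =>
    intro z w h
    simp only [tauWord_cons] at h
    exact (S.τ a).injective (ih h)
lemma tauWord_step (i j : X) (v : List X) (z : X) :
    S.tauWord (S.σ i j :: S.τ j i :: v) z = S.tauWord (i :: j :: v) z := by
  simp only [tauWord_cons]
  rw [tau_braid]

/-! J on lists -/

def JL (S : NDIS X) : List X → List X
  | [] => []
  | a :: l => S.tauWord l a :: S.JL l

@[simp] lemma JL_nil : S.JL [] = [] := rfl
@[simp] lemma JL_cons (a : X) (l : List X) : S.JL (a :: l) = S.tauWord l a :: S.JL l := rfl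
@[simp] lemma length_JL (l : List X) : (S.JL l).length = l.length := by
  induction l with
  | nil => rfl
  | cons a l ih => simp [JL, ih]

lemma JL_injective : Function.Injective S.JL := by
  intro l l' h
  induction l generalizing l' with
  | nil => cases l' with
    | nil => rfl
    | cons b m => simp [JL] at h
  | cons a l ih =>
    cases l' with
    | nil => simp [JL] at h
    | cons b m =>
      simp only [JL_cons, List.cons.injEq] at h
      have hlm : l = m := ih h.2
      subst hlm
      have : a = b := S.tauWord_injective l (by simpa using h.1)
      rw [this]

lemma JL_step (u : List X) (i j : X) (v : List X) :
    ∃ (P Q : List X) (A B : X), P.length = u.length ∧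
      S.JL (u ++ i :: j :: v) = P ++ A :: B :: Q ∧
      S.JL (u ++ S.σ i j :: S.τ j i :: v) = P ++ B :: A :: Q := by
  induction u with
  | nil =>
    refine ⟨[], S.JL v, S.tauWord v (S.τ j i), S.tauWord v j, rfl, ?_, ?_⟩
    · simp [tauWord_cons]
    · simp only [List.nil_append, JL_cons, tauWord_cons]
      rw [invol2]
  | cons c u ih =>
    obtain ⟨P, Q, A, B, hlen, h1, h2⟩ := ih
    refine ⟨S.tauWord (u ++ i :: j :: v) c :: P, Q, A, B, by simp [hlen], by simp [h1], ?_⟩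
    have : S.tauWord (u ++ S.σ i j :: S.τ j i :: v) c = S.tauWord (u ++ i :: j :: v) c := by
      rw [tauWord_append, tauWord_append, tauWord_step]
    simp [h2, this]

end NDIS

namespace NDIS

variable {X : Type*} (S : NDIS X)

lemma getElem_mid_left (P Q : List X) (A B : X) (m : ℕ) (h : m < P.length)
    (hm : m < (P ++ A :: B :: Q).length) : (P ++ A :: B :: Q)[m] = P[m] := by
  rw [List.getElem_append, dif_pos h]

lemma getElem_mid_fst (P Q : List X) (A B : X) (m : ℕ) (h : m = P.length)
    (hm : m < (P ++ A :: B :: Q).length) : (P ++ A :: B :: Q)[m] = A := by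
  subst h
  rw [List.getElem_append, dif_neg (by omega)]
  simp

lemma getElem_mid_snd (P Q : List X) (A B : X) (m : ℕ) (h : m = P.length + 1)
    (hm : m < (P ++ A :: B :: Q).length) : (P ++ A :: B :: Q)[m] = B := by
  subst h
  rw [List.getElem_append, dif_neg (by omega)]
  have h1 : P.length + 1 - P.length = 1 := by omega
  simp [h1]

lemma getElem_mid_right (P Q : List X) (A B : X) (m : ℕ) (h : P.length + 2 ≤ m)
    (hm : m < (P ++ A :: B :: Q).length) :
    (P ++ A :: B :: Q)[m] = Q[m - P.length - 2]'(by simp at hm; omega) := by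
  rw [List.getElem_append, dif_neg (by omega)]
  rw [List.getElem_cons, dif_neg (by omega), List.getElem_cons, dif_neg (by omega)]
  congr 1 <;> omega

/-- `J` on tuples. -/
def Jf (S : NDIS X) {n : ℕ} (x : Fin n → X) : Fin n → X :=
  fun t => (S.JL (List.ofFn x))[(t : ℕ)]'(by simpa using t.isLt)

lemma ofFn_decomp {n : ℕ} (x : Fin n → X) (j : ℕ) (hj : j + 1 < n) :
    List.ofFn x = (List.ofFn x).take j ++
      x ⟨j, by omega⟩ :: x ⟨j + 1, hj⟩ :: (List.ofFn x).drop (j + 2) := by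
  have h2 : (List.ofFn x).drop (j + 1) =
      x ⟨j + 1, hj⟩ :: (List.ofFn x).drop (j + 2) := by
    rw [List.drop_eq_getElem_cons (by simpa using hj)]
    simp [List.getElem_ofFn]
  have h1 : (List.ofFn x).drop j = x ⟨j, by omega⟩ :: (List.ofFn x).drop (j + 1) := by
    rw [List.drop_eq_getElem_cons (by first | omega | (simp; omega))]
    simp [List.getElem_ofFn]
  conv_lhs => rw [← List.take_append_drop j (List.ofFn x)]
  rw [h1, h2]

lemma ofFn_bmap {n : ℕ} (j : ℕ) (hj : j + 1 < n) (x : Fin n → X) :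
    List.ofFn (S.bmap j hj x) = (List.ofFn x).take j ++
      S.σ (x ⟨j, by omega⟩) (x ⟨j + 1, hj⟩) ::
      S.τ (x ⟨j + 1, hj⟩) (x ⟨j, by omega⟩) :: (List.ofFn x).drop (j + 2) := by
  have hPlen : ((List.ofFn x).take j).length = j := by simp; omega
  apply List.ext_getElem
  · simp; omega
  intro m h1 h2
  have hmn : m < n := by simpa using h1
  rw [List.getElem_ofFn, List.getElem_append]
  simp only [hPlen]
  split_ifs with c1
  · rw [List.getElem_take, List.getElem_ofFn]
    simp only [bmap]
    rw [if_neg (by first | omega | (simp; omega)), if_neg (by first | omega | (simp; omega))]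
  · rw [List.getElem_cons]
    split_ifs with c2
    · simp only [bmap]
      rw [if_pos (by first | omega | (simp; omega))]
    · rw [List.getElem_cons]
      split_ifs with c3
      · simp only [bmap]
        rw [if_neg (by first | omega | (simp; omega)), if_pos (by first | omega | (simp; omega))]
      · rw [List.getElem_drop, List.getElem_ofFn]
        simp only [bmap]
        rw [if_neg (by first | omega | (simp; omega)), if_neg (by first | omega | (simp; omega))]
        congr 1
        exact Fin.ext (by first | omega | (simp; omega))

lemma Jf_apply {n : ℕ} (x : Fin n → X) (t : Fin n) :
    S.Jf x t = (S.JL (List.ofFn x))[(t : ℕ)]'(by simpa using t.isLt) := rfl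

lemma Jf_injective {n : ℕ} : Function.Injective (S.Jf : (Fin n → X) → (Fin n → X)) := by
  intro x y h
  have hJ : S.JL (List.ofFn x) = S.JL (List.ofFn y) := by
    apply List.ext_getElem (by simp)
    intro m hm1 hm2
    have := congrFun h ⟨m, by simpa using hm1⟩
    simpa [Jf_apply] using this
  exact List.ofFn_injective (S.JL_injective hJ)

lemma Jf_bmap {n : ℕ} (j : ℕ) (hj : j + 1 < n) (x : Fin n → X) :
    S.Jf (S.bmap j hj x) =
      S.Jf x ∘ (Equiv.swap (⟨j, by omega⟩ : Fin n) ⟨j + 1, hj⟩) := by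
  obtain ⟨P, Q, A, B, hlen, h1, h2⟩ := S.JL_step ((List.ofFn x).take j)
    (x ⟨j, by omega⟩) (x ⟨j + 1, hj⟩) ((List.ofFn x).drop (j + 2))
  have e1 : S.JL (List.ofFn x) = P ++ A :: B :: Q := by
    conv_lhs => rw [ofFn_decomp x j hj]
    exact h1
  have e2 : S.JL (List.ofFn (S.bmap j hj x)) = P ++ B :: A :: Q := by
    rw [S.ofFn_bmap j hj x]
    exact h2
  have hP : P.length = j := hlen.trans (by simp; omega)
  have hlenJ : n = P.length + (2 + Q.length) := by
    have := congrArg List.length e1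
    simp at this
    omega
  funext t
  simp only [Function.comp_apply, Jf_apply]
  rw [List.getElem_of_eq e2, List.getElem_of_eq e1]
  have ht := t.isLt
  by_cases c2 : (t : ℕ) = j
  · have htj : t = (⟨j, by omega⟩ : Fin n) := Fin.ext (by simpa using c2)
    have hsw : (Equiv.swap (⟨j, by omega⟩ : Fin n) ⟨j + 1, hj⟩) t = ⟨j + 1, hj⟩ := by
      rw [htj]; exact Equiv.swap_apply_left _ _
    rw [hsw]
    rw [getElem_mid_fst P Q B A _ (by omega), getElem_mid_snd P Q A B _ (by simp; omega)]
  · by_cases c3 : (t : ℕ) = j + 1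
    · have htj : t = (⟨j + 1, hj⟩ : Fin n) := Fin.ext (by simpa using c3)
      have hsw : (Equiv.swap (⟨j, by omega⟩ : Fin n) ⟨j + 1, hj⟩) t = ⟨j, by omega⟩ := by
        rw [htj]; exact Equiv.swap_apply_right _ _
      rw [hsw]
      rw [getElem_mid_snd P Q B A _ (by omega), getElem_mid_fst P Q A B _ (by simp; omega)]
    · have hsw : (Equiv.swap (⟨j, by omega⟩ : Fin n) ⟨j + 1, hj⟩) t = t :=
        Equiv.swap_apply_of_ne_of_ne
          (fun h => c2 (by rw [h])) (fun h => c3 (by rw [h]))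
      rw [hsw]
      by_cases c1 : (t : ℕ) < j
      · rw [getElem_mid_left P Q B A _ (by omega), getElem_mid_left P Q A B _ (by omega)]
      · rw [getElem_mid_right P Q B A _ (by omega), getElem_mid_right P Q A B _ (by omega)]

end NDIS

namespace NDIS

variable {X : Type*} (S : NDIS X)

lemma Jf_phi {n : ℕ} (hn : 1 ≤ n) (φ : Equiv.Perm (Fin n) →* Equiv.Perm (Fin n → X))
    (hφ : ∀ (j : ℕ) (hj : j + 1 < n),
      ⇑(φ (Equiv.swap ⟨j, by omega⟩ ⟨j + 1, hj⟩)) = S.bmap j hj) :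
    ∀ (g : Equiv.Perm (Fin n)) (x : Fin n → X), S.Jf (φ g x) = S.Jf x ∘ ⇑g⁻¹ := by
  obtain ⟨m, rfl⟩ : ∃ m, n = m + 1 := ⟨n - 1, by omega⟩
  
  intro g
  have hg : g ∈ Submonoid.closure
      (Set.range fun i : Fin m => Equiv.swap i.castSucc i.succ) := by
    rw [Equiv.Perm.mclosure_swap_castSucc_succ]; trivial
  induction hg using Submonoid.closure_induction with
  | mem g hgen =>
    obtain ⟨i, rfl⟩ := hgen
    intro x
    have hj : (i : ℕ) + 1 < m + 1 := by omega
    have hcs : (i.castSucc : Fin (m + 1)) = ⟨(i : ℕ), by omega⟩ := Fin.ext (by simp)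
    have hsc : (i.succ : Fin (m + 1)) = ⟨(i : ℕ) + 1, hj⟩ := Fin.ext (by simp)
    simp only [hcs, hsc]
    have h1 : φ (Equiv.swap (⟨(i : ℕ), by omega⟩ : Fin (m + 1)) ⟨(i : ℕ) + 1, hj⟩) x
        = S.bmap (i : ℕ) hj x := congrFun (hφ (i : ℕ) hj) x
    rw [h1, S.Jf_bmap (i : ℕ) hj x]
    congr 1
  | one =>
    intro x
    simp
  | mul g h hgc hhc ihg ihh =>
    intro x
    have : φ (g * h) x = φ g (φ h x) := by simp [map_mul]
    rw [this, ihg, ihh]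
    funext q
    simp [Function.comp, mul_inv_rev]
  
lemma phi_fixed_iff {n : ℕ} (hn : 1 ≤ n) (φ : Equiv.Perm (Fin n) →* Equiv.Perm (Fin n → X))
    (hφ : ∀ (j : ℕ) (hj : j + 1 < n),
      ⇑(φ (Equiv.swap ⟨j, by omega⟩ ⟨j + 1, hj⟩)) = S.bmap j hj)
    (g : Equiv.Perm (Fin n)) (x : Fin n → X) :
    φ g x = x ↔ ∀ p : Fin n, S.Jf x (g p) = S.Jf x p := by
  constructor
  · intro h p
    have h2 := S.Jf_phi hn φ hφ g x
    rw [h] at h2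
    have := congrFun h2 (g p)
    simpa using this
  · intro h
    apply S.Jf_injective
    rw [S.Jf_phi hn φ hφ g x]
    funext q
    simp only [Function.comp_apply]
    have := h (g⁻¹ q)
    rw [show g (g⁻¹ q) = q by simp] at this
    exact this.symm

end NDIS

namespace NDIS

variable {X : Type*} (S : NDIS X)

@[simp] lemma Psi_zero (a : X) : S.Psi 0 a = [] := by simp [Psi]

lemma Psi_succ (m : ℕ) (a : X) : S.Psi (m + 1) a = S.D^[m] a :: S.Psi m a := by
  unfold Psi
  rw [List.range_succ_eq_map, List.map_cons, List.map_map]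
  have h0 : m + 1 - 1 - 0 = m := by omega
  rw [h0]
  congr 1
  have : ((fun t => S.D^[m + 1 - 1 - t] a) ∘ Nat.succ) = fun t => S.D^[m - 1 - t] a := by
    funext t
    simp only [Function.comp_apply]
    congr 1
    omega
  rw [this]

@[simp] lemma length_Psi (m : ℕ) (a : X) : (S.Psi m a).length = m := by simp [Psi]

lemma tauWord_Psi (m : ℕ) (a : X) : S.tauWord (S.Psi m a) (S.D^[m] a) = a := by
  induction m with
  | zero => simp
  | succ m ih =>
    rw [Psi_succ, tauWord_cons, Function.iterate_succ_apply', tau_D]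
    exact ih

lemma tauWord_Psi_eq_iff (m : ℕ) (a z : X) :
    S.tauWord (S.Psi m a) z = a ↔ z = S.D^[m] a := by
  constructor
  · intro h
    exact S.tauWord_injective (S.Psi m a) (h.trans (S.tauWord_Psi m a).symm)
  · rintro rfl
    exact S.tauWord_Psi m a

/-- Word built from a list of (length, letter) blocks. -/
def bw (S : NDIS X) : List (ℕ × X) → List X
  | [] => []
  | p :: t => S.Psi p.1 p.2 ++ S.bw t

/-- The `J`-image of `bw`: constant on blocks. -/
def bc (S : NDIS X) : List (ℕ × X) → List X
  | [] => []
  | p :: t => List.replicate p.1 (S.tauWord (S.bw t) p.2) ++ S.bc t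

/-- Offset of block `i`. -/
def offP (l : List (ℕ × X)) (i : ℕ) : ℕ := ((l.take i).map Prod.fst).sum

@[simp] lemma bw_nil : S.bw [] = [] := rfl
@[simp] lemma bw_cons (p : ℕ × X) (t : List (ℕ × X)) :
    S.bw (p :: t) = S.Psi p.1 p.2 ++ S.bw t := rfl
@[simp] lemma bc_nil : S.bc [] = [] := rfl
@[simp] lemma bc_cons (p : ℕ × X) (t : List (ℕ × X)) :
    S.bc (p :: t) = List.replicate p.1 (S.tauWord (S.bw t) p.2) ++ S.bc t := rfl

lemma bw_append (l l' : List (ℕ × X)) : S.bw (l ++ l') = S.bw l ++ S.bw l' := by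
  induction l with
  | nil => simp
  | cons p t ih => simp [ih]

lemma bw_eq_flatten (l : List (ℕ × X)) :
    S.bw l = (l.map fun p => S.Psi p.1 p.2).flatten := by
  induction l with
  | nil => simp
  | cons p t ih => simp [ih]

lemma JL_Psi_append (m : ℕ) (a : X) (rest : List X) :
    S.JL (S.Psi m a ++ rest) = List.replicate m (S.tauWord rest a) ++ S.JL rest := by
  induction m with
  | zero => simp
  | succ m ih =>
    rw [Psi_succ, List.cons_append, JL_cons, ih]
    rw [tauWord_append, tauWord_Psi]
    rw [List.replicate_succ]
    rfl

lemma JL_bw (l : List (ℕ × X)) : S.JL (S.bw l) = S.bc l := by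
  induction l with
  | nil => simp
  | cons p t ih => rw [bw_cons, JL_Psi_append, ih, bc_cons]

@[simp] lemma length_bc (l : List (ℕ × X)) : (S.bc l).length = (l.map Prod.fst).sum := by
  induction l with
  | nil => simp
  | cons p t ih => simp [ih]

@[simp] lemma offP_zero (l : List (ℕ × X)) : offP l 0 = 0 := by simp [offP]

lemma offP_cons_succ (q : ℕ × X) (t : List (ℕ × X)) (i : ℕ) :
    offP (q :: t) (i + 1) = q.1 + offP t i := by
  simp [offP]

lemma bc_getElem (l : List (ℕ × X)) (i : ℕ) (hi : i < l.length) (p : ℕ)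
    (hp1 : offP l i ≤ p) (hp2 : p < offP l i + (l[i]).1)
    (hp : p < (S.bc l).length) :
    (S.bc l)[p] = S.tauWord (S.bw (l.drop (i + 1))) (l[i]).2 := by
  induction l generalizing i p with
  | nil => simp at hi
  | cons q t ih =>
    rw [List.getElem_of_eq (S.bc_cons q t) hp]
    match i with
    | 0 =>
      simp only [offP_zero, Nat.zero_add, List.getElem_cons_zero] at hp2 ⊢
      rw [List.getElem_append, dif_pos (by simpa using hp2)]
      rw [List.getElem_replicate]
      simp
    | i + 1 =>
      rw [offP_cons_succ] at hp1 hp2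
      simp only [List.getElem_cons_succ, List.drop_succ_cons] at hp2 ⊢
      rw [List.getElem_append, dif_neg (by simp; omega)]
      simp only [List.length_replicate]
      exact ih i (by simpa using hi) (p - q.1) (by omega) (by omega)
        (by simp at hp ⊢; omega)

lemma exists_block (l : List (ℕ × X)) (p : ℕ) (hp : p < (l.map Prod.fst).sum) :
    ∃ i, ∃ hi : i < l.length, offP l i ≤ p ∧ p < offP l i + (l[i]).1 := by
  induction l generalizing p with
  | nil => simp at hp
  | cons q t ih =>
    by_cases hc : p < q.1
    · exact ⟨0, by simp, by simp, by simpa using hc⟩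
    · obtain ⟨i, hi, h1, h2⟩ := ih (p - q.1) (by simp at hp; omega)
      refine ⟨i + 1, by simpa using hi, ?_, ?_⟩
      · rw [offP_cons_succ]; omega
      · rw [offP_cons_succ]
        simp only [List.getElem_cons_succ]
        omega

end NDIS

namespace NDIS

variable {X : Type*} (S : NDIS X)

/-- The list of (block length, letter) pairs. -/
def pairList {k : ℕ} (L : Fin k → ℕ) (a : Fin k → X) : List (ℕ × X) :=
  List.ofFn (fun t => (L t, a t))

variable {k : ℕ} (L : Fin k → ℕ) (a : Fin k → X)

@[simp] lemma length_pairList : (pairList L a).length = k := by simp [pairList]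

lemma map_fst_pairList : (pairList L a).map Prod.fst = List.ofFn L := by
  simp [pairList, List.map_ofFn]
  rfl

lemma sum_pairList : ((pairList L a).map Prod.fst).sum = ∑ t, L t := by
  rw [map_fst_pairList, List.sum_ofFn]

lemma pairList_getElem (i : ℕ) (hi : i < k)
    (h : i < (pairList L a).length) : (pairList L a)[i] = (L ⟨i, hi⟩, a ⟨i, hi⟩) := by
  unfold pairList
  exact List.getElem_ofFn ..

lemma word_eq_bw : S.word L a = S.bw (pairList L a) := by
  rw [bw_eq_flatten]
  unfold word pairList
  rw [List.map_ofFn]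
  rfl

lemma offP_pairList (i : ℕ) (hi : i ≤ k) :
    offP (pairList L a) i =
      ∑ t ∈ Finset.univ.filter (fun t : Fin k => (t : ℕ) < i), L t := by
  induction i with
  | zero => simp [offP]
  | succ i ih =>
    have hik : i < k := by omega
    unfold offP
    rw [List.take_succ]
    have hsome : (pairList L a)[i]? = some (L ⟨i, hik⟩, a ⟨i, hik⟩) := by
      rw [List.getElem?_eq_getElem (by simp; omega)]
      rw [pairList_getElem L a i hik]
    rw [hsome]
    rw [List.map_append, List.sum_append]
    have hins : Finset.univ.filter (fun t : Fin k => (t : ℕ) < i + 1) =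
        insert ⟨i, hik⟩ (Finset.univ.filter (fun t : Fin k => (t : ℕ) < i)) := by
      ext t
      simp [Fin.ext_iff]
      omega
    rw [hins, Finset.sum_insert (by simp)]
    have := ih (by omega)
    unfold offP at this
    rw [this]
    simp [add_comm]

lemma offP_blockOffset (i : Fin k) :
    offP (pairList L a) (i : ℕ) = blockOffset L i := by
  rw [offP_pairList L a (i : ℕ) (le_of_lt i.isLt)]
  unfold blockOffset
  apply Finset.sum_congr _ (fun _ _ => rfl)
  ext t
  simp only [Finset.mem_filter, Finset.mem_univ, true_and, Fin.lt_def]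

lemma c_distinct [Nonempty X] (hfam : S.IsLambdaFamily L a) (i j : Fin k) (hij : i < j) :
    S.tauWord (S.bw ((pairList L a).drop ((i : ℕ) + 1))) (a i) ≠
      S.tauWord (S.bw ((pairList L a).drop ((j : ℕ) + 1))) (a j) := by
  intro heq
  have hjk : (j : ℕ) < (pairList L a).length := by simp
  have hij' : (i : ℕ) < (j : ℕ) := hij
  have hdecomp : (pairList L a).drop ((i : ℕ) + 1) =
      ((pairList L a).drop ((i : ℕ) + 1)).take ((j : ℕ) - (i : ℕ) - 1) ++
        (L j, a j) :: (pairList L a).drop ((j : ℕ) + 1) := by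
    conv_lhs => rw [← List.take_append_drop ((j : ℕ) - (i : ℕ) - 1)
      ((pairList L a).drop ((i : ℕ) + 1))]
    congr 1
    rw [List.drop_drop]
    have harith : (i : ℕ) + 1 + ((j : ℕ) - (i : ℕ) - 1) = (j : ℕ) := by omega
    rw [harith, List.drop_eq_getElem_cons hjk, pairList_getElem L a (j : ℕ) j.isLt]
  have hbwmid : S.bw (((pairList L a).drop ((i : ℕ) + 1)).take ((j : ℕ) - (i : ℕ) - 1)) =
      S.midword L a i j := by
    rw [bw_eq_flatten]
    unfold midword
    congr 1
    rw [List.map_take, List.map_drop]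
    congr 2
    unfold pairList
    rw [List.map_ofFn]
    rfl
  rw [hdecomp, bw_append, bw_cons, tauWord_append] at heq
  rw [tauWord_append] at heq
  have h1 := S.tauWord_injective _ heq
  have h2 := (S.tauWord_Psi_eq_iff (L j) (a j) _).mp h1
  apply hfam i j hij
  rw [← hbwmid, h2, S.Dinv_iter_D_iter]

end NDIS

/-- Let `(X, r)` be a non-degenerate involutive solution with `|X| = m ≥ 2`,
`λ ∈ P(n, m)` with positive parts `L`, `x ∈ X^n` a `λ`-element (regarded as a function
`Fin n → X`), and `φ : S_n → Perm(X^n)` the homomorphism sending each adjacent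
transposition to the corresponding `b_j`. Then the stabilizer `{g | φ(g)(x) = x}` is
exactly the Young subgroup `S_{λ_1} × ⋯ × S_{λ_k}`, i.e. the set of permutations mapping
each consecutive block `[λ_1 + ⋯ + λ_{i−1}, λ_1 + ⋯ + λ_i)` into itself. -/
theorem stabilizer_of_lambda_element {X : Type*} [Fintype X] [Nonempty X]
    (S : NDIS X) (hm : 2 ≤ Fintype.card X)
    {n k : ℕ} (hn : 2 ≤ n) (L : Fin k → ℕ) (hpos : ∀ t, 0 < L t) (hmono : Antitone L)
    (hsum : ∑ t, L t = n) (hk : k ≤ Fintype.card X)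
    (a : Fin k → X) (hfam : S.IsLambdaFamily L a)
    (hw : (S.word L a).length = n)
    (φ : Equiv.Perm (Fin n) →* Equiv.Perm (Fin n → X))
    (hφ : ∀ (j : ℕ) (hj : j + 1 < n),
      ⇑(φ (Equiv.swap ⟨j, by omega⟩ ⟨j + 1, hj⟩)) = S.bmap j hj) :
    {g : Equiv.Perm (Fin n) |
        φ g (fun t => (S.word L a).get (Fin.cast hw.symm t)) =
          fun t => (S.word L a).get (Fin.cast hw.symm t)} =
      {g : Equiv.Perm (Fin n) | ∀ (i : Fin k) (p : Fin n),
        blockOffset L i ≤ (p : ℕ) ∧ (p : ℕ) < blockOffset L i + L i →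
          blockOffset L i ≤ ((g p : Fin n) : ℕ) ∧
            ((g p : Fin n) : ℕ) < blockOffset L i + L i} := by
  classical
  set x : Fin n → X := fun t => (S.word L a).get (Fin.cast hw.symm t) with hx
  have hofn : List.ofFn x = S.word L a := by
    apply List.ext_getElem (by simpa using hw.symm)
    intro m h1 h2
    rw [List.getElem_ofFn]
    simp [hx, List.get_eq_getElem]
  have hbw : S.word L a = S.bw (NDIS.pairList L a) := S.word_eq_bw L a
  have hJLx : S.JL (List.ofFn x) = S.bc (NDIS.pairList L a) := by
    rw [hofn, hbw, NDIS.JL_bw]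
  have hsumfst : (((NDIS.pairList L a).map Prod.fst)).sum = n := by
    rw [NDIS.sum_pairList]; exact hsum
  have hbclen : (S.bc (NDIS.pairList L a)).length = n := by
    rw [NDIS.length_bc, hsumfst]
  have hJf : ∀ t : Fin n, S.Jf x t =
      (S.bc (NDIS.pairList L a))[(t : ℕ)]'(by rw [hbclen]; exact t.isLt) := by
    intro t
    rw [NDIS.Jf_apply]
    exact List.getElem_of_eq hJLx _
  have hval : ∀ (i : Fin k) (p : Fin n),
      blockOffset L i ≤ (p : ℕ) → (p : ℕ) < blockOffset L i + L i →
      S.Jf x p = S.tauWord (S.bw ((NDIS.pairList L a).drop ((i : ℕ) + 1))) (a i) := by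
    intro i p h1 h2
    have hik : (i : ℕ) < (NDIS.pairList L a).length := by
      rw [NDIS.length_pairList]; exact i.isLt
    have hgi : (NDIS.pairList L a)[(i : ℕ)]'hik = (L i, a i) := by
      rw [NDIS.pairList_getElem L a (i : ℕ) i.isLt]
    have hoff : NDIS.offP (NDIS.pairList L a) (i : ℕ) = blockOffset L i :=
      NDIS.offP_blockOffset L a i
    have hb := S.bc_getElem (NDIS.pairList L a) (i : ℕ) hik (p : ℕ)
      (by rw [hoff]; exact h1) (by rw [hoff, hgi]; exact h2)
      (by rw [hbclen]; exact p.isLt)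
    rw [hJf p, hb, hgi]
  have hexists : ∀ p : Fin n, ∃ i : Fin k,
      blockOffset L i ≤ (p : ℕ) ∧ (p : ℕ) < blockOffset L i + L i := by
    intro p
    obtain ⟨i, hi, h1, h2⟩ := NDIS.exists_block (NDIS.pairList L a) (p : ℕ)
      (by rw [hsumfst]; exact p.isLt)
    have hik : i < k := by rwa [NDIS.length_pairList] at hi
    have hgi : (NDIS.pairList L a)[i]'hi = (L ⟨i, hik⟩, a ⟨i, hik⟩) :=
      NDIS.pairList_getElem L a i hik hi
    have hoff : NDIS.offP (NDIS.pairList L a) i = blockOffset L ⟨i, hik⟩ :=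
      NDIS.offP_blockOffset L a ⟨i, hik⟩
    refine ⟨⟨i, hik⟩, ?_, ?_⟩
    · rw [← hoff]; exact h1
    · rw [← hoff]
      rw [hgi] at h2
      exact h2
  have hdist : ∀ i j : Fin k, i ≠ j →
      S.tauWord (S.bw ((NDIS.pairList L a).drop ((i : ℕ) + 1))) (a i) ≠
        S.tauWord (S.bw ((NDIS.pairList L a).drop ((j : ℕ) + 1))) (a j) := by
    intro i j hne
    rcases lt_or_gt_of_ne hne with h | h
    · exact S.c_distinct L a hfam i j h
    · exact (S.c_distinct L a hfam j i h).symm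
  ext g
  simp only [Set.mem_setOf_eq]
  rw [S.phi_fixed_iff (by omega) φ hφ g x]
  constructor
  · rintro h i p ⟨h1, h2⟩
    obtain ⟨i', h1', h2'⟩ := hexists (g p)
    have e1 := hval i p h1 h2
    have e2 := hval i' (g p) h1' h2'
    by_cases hii : i' = i
    · subst hii; exact ⟨h1', h2'⟩
    · exfalso
      apply hdist i' i hii
      rw [← e1, ← e2, h p]
  · intro h p
    obtain ⟨i, h1, h2⟩ := hexists p
    obtain ⟨h1', h2'⟩ := h i p ⟨h1, h2⟩
    rw [hval i p h1 h2, hval i (g p) h1' h2']
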